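/- Let V be a real vector space, a(·;·,·) linear in the first (tensor) argument and symmetric bilinear in the last two, l linear. Define ℒ(C,u) := 2 l(u) − a(C;u,u). Suppose (C^L, u^L) is a stationary point of ℒ, i.e. the directional derivative of ℒ at (C^L,u^L) in any direction (δC, δu) vanishes, and suppose u^S, C^S are arbitrary. Then, with e_C := C^L − C^S and e_u := u^L − u^S, ℒ(C^L,u^L) − ℒ(C^S,u^S) = ½ Dℒ(C^S,u^S)(e_C, e_u) + ½ a(e_C; e_u, e_u). -/

import Mathlib

lemma cubic_deriv (c0 c1 c2 c3 : ℝ) :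
    deriv (fun s : ℝ => c0 + c1*s + c2*s^2 + c3*s^3) 0 = c1 := by
  have h := (((hasDerivAt_const (0:ℝ) c0).add
      ((hasDerivAt_id 0).const_mul c1)).add
      ((hasDerivAt_pow 2 (0:ℝ)).const_mul c2)).add
      ((hasDerivAt_pow 3 (0:ℝ)).const_mul c3)
  norm_num at h
  simpa [Pi.add_def] using h.deriv

lemma lag_deriv (V W : Type*) [AddCommGroup V] [Module ℝ V]
    [AddCommGroup W] [Module ℝ W]
    (a : W →ₗ[ℝ] V →ₗ[ℝ] V →ₗ[ℝ] ℝ) (hsymm : ∀ C u v, a C u v = a C v u)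
    (l : V →ₗ[ℝ] ℝ)
    (C : W) (u : V) (δC : W) (δu : V) :
    deriv (fun s : ℝ => 2 * l (u + s • δu) - a (C + s • δC) (u + s • δu) (u + s • δu)) 0
      = 2 * l δu - a δC u u - 2 * a C u δu := by
  have heq : (fun s : ℝ => 2 * l (u + s • δu) - a (C + s • δC) (u + s • δu) (u + s • δu))
      = fun s : ℝ => (2 * l u - a C u u)
        + (2 * l δu - a δC u u - 2 * a C u δu) * s
        + (-(2 * a δC u δu) - a C δu δu) * s^2
        + (-(a δC δu δu)) * s^3 := by
    funext s
    simp only [map_add, map_smul, LinearMap.add_apply, LinearMap.smul_apply, smul_eq_mul]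
    linear_combination (-s) * hsymm C δu u + (-(s^2)) * hsymm δC δu u
  rw [heq, cubic_deriv]

/-- Abstract error representation (Theorem 3.1): at a stationary point of the Lagrangian
ℒ(C,u) = 2l(u) - a(C;u,u), the difference of Lagrangians equals half the directional
derivative at the approximate pair plus the remainder ½ a(e_C; e_u, e_u). -/
theorem error_representation (V W : Type*) [AddCommGroup V] [Module ℝ V]
    [AddCommGroup W] [Module ℝ W]
    (a : W →ₗ[ℝ] V →ₗ[ℝ] V →ₗ[ℝ] ℝ) (hsymm : ∀ C u v, a C u v = a C v u)
    (l : V →ₗ[ℝ] ℝ)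
    (L : W → V → ℝ) (hL : ∀ C u, L C u = 2 * l u - a C u u)
    (CL CS : W) (uL uS : V)
    (hstat : ∀ (δC : W) (δu : V),
      deriv (fun s : ℝ => L (CL + s • δC) (uL + s • δu)) 0 = 0) :
    L CL uL - L CS uS =
      (1/2) * deriv (fun s : ℝ => L (CS + s • (CL - CS)) (uS + s • (uL - uS))) 0
      + (1/2) * a (CL - CS) (uL - uS) (uL - uS) := by
  have hLfun : L = fun C u => 2 * l u - a C u u := by
    funext C u; exact hL C u
  subst hLfun
  have hstat' := hstat (CL - CS) (uL - uS)
  rw [lag_deriv _ _ a hsymm] at hstat'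
  rw [lag_deriv _ _ a hsymm]
  -- expand all occurrences of CL - CS, uL - uS
  have hCL : CL = CS + (CL - CS) := by abel
  have huL : uL = uS + (uL - uS) := by abel
  set eC := CL - CS with hec
  set eu := uL - uS with heu
  rw [hCL, huL] at hstat' ⊢
  simp only [map_add, LinearMap.add_apply] at hstat' ⊢
  have hs1 := hsymm CS uS eu
  have hs2 := hsymm CS eu uS
  have hs3 := hsymm eC uS eu
  linarith
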